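/- Let k be a nonarchimedean local field with valuation ν and let α ∈ O_k* be a unit that is not a square. Let δ ∈ k minimize ν(δ² - α) over δ ∈ k. If L = k(√α), then for z = a + b√α with a, b ∈ k, b ≠ 0, the element ξ = a + bδ ∈ k minimizes the distance |z - ξ'| over ξ' ∈ k, and ν(z - ξ) = ν(b) + ½ν(δ² - α). -/

import Mathlib

/-- Let `k ⊆ L = k(√α)` with a nonarchimedean absolute value on `L` invariant under the
conjugation `σ` (the unique extension of the absolute value of `k`). Let `δ ∈ k` minimize
`|δ'² - α|` over `δ' ∈ k` (so `(δ² - α)` is the quadratic defect of the nonsquare unit `α`).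
Then for `z = a + b√α` with `b ≠ 0`, the element `ξ = a + bδ ∈ k` minimizes `|z - ξ'|`
over `ξ' ∈ k`, and `ν(z - ξ) = ν(b) + ½ν(δ² - α)`, i.e. `|z - ξ|² = |b|²·|δ² - α|`. -/
theorem closest_rational_point {k L : Type*} [Field k] [Field L] [Algebra k L]
    (abs : AbsoluteValue L ℝ)
    (hna : ∀ x y : L, abs (x + y) ≤ max (abs x) (abs y))
    (sα : L) (α : k) (hsα : sα ^ 2 = algebraMap k L α)
    (hns : ¬∃ c : k, c ^ 2 = α)
    (σ : L ≃ₐ[k] L) (hσ : σ sα = -sα) (hinv : ∀ x : L, abs (σ x) = abs x)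
    (δ : k) (hδ : ∀ δ' : k, abs (algebraMap k L (δ ^ 2 - α)) ≤ abs (algebraMap k L (δ' ^ 2 - α)))
    (a b : k) (hb : b ≠ 0) :
    let z : L := algebraMap k L a + algebraMap k L b * sα
    let ξ : k := a + b * δ
    (∀ ξ' : k, abs (z - algebraMap k L ξ) ≤ abs (z - algebraMap k L ξ')) ∧
      (abs (z - algebraMap k L ξ)) ^ 2 =
        (abs (algebraMap k L b)) ^ 2 * abs (algebraMap k L (δ ^ 2 - α)) := by
  intro z ξ
  have hzdef : z = algebraMap k L a + algebraMap k L b * sα := rfl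
  have hξdef : ξ = a + b * δ := rfl
  -- Key: for any c ∈ k, |√α − c|² = |c² − α|
  have key : ∀ c : k, (abs (sα - algebraMap k L c)) ^ 2 = abs (algebraMap k L (c ^ 2 - α)) := by
    intro c
    have h1 : (sα - algebraMap k L c) * σ (sα - algebraMap k L c)
        = algebraMap k L (c ^ 2 - α) := by
      rw [map_sub, hσ, σ.commutes, map_sub, map_pow, ← hsα]
      ring
    calc (abs (sα - algebraMap k L c)) ^ 2
        = abs (sα - algebraMap k L c) * abs (σ (sα - algebraMap k L c)) := by
          rw [hinv]; ring
      _ = abs ((sα - algebraMap k L c) * σ (sα - algebraMap k L c)) := (abs.map_mul _ _).symm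
      _ = abs (algebraMap k L (c ^ 2 - α)) := by rw [h1]
  -- Factorization: z − ξ' = b·(√α − (ξ'−a)/b)
  have hz : ∀ ξ' : k, z - algebraMap k L ξ'
      = algebraMap k L b * (sα - algebraMap k L ((ξ' - a) / b)) := by
    intro ξ'
    have h2 : algebraMap k L b * algebraMap k L ((ξ' - a) / b) = algebraMap k L (ξ' - a) := by
      rw [← map_mul]
      congr 1
      field_simp
    rw [hzdef, mul_sub, h2, map_sub]
    ring
  have hsq : ∀ ξ' : k, (abs (z - algebraMap k L ξ')) ^ 2
      = (abs (algebraMap k L b)) ^ 2 * abs (algebraMap k L (((ξ' - a) / b) ^ 2 - α)) := by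
    intro ξ'
    rw [hz, abs.map_mul, mul_pow, key]
  have hξδ : (ξ - a) / b = δ := by
    rw [hξdef]
    field_simp
    ring
  constructor
  · intro ξ'
    have h3 : (abs (z - algebraMap k L ξ)) ^ 2 ≤ (abs (z - algebraMap k L ξ')) ^ 2 := by
      rw [hsq, hsq, hξδ]
      exact mul_le_mul_of_nonneg_left (hδ _) (by positivity)
    exact (pow_le_pow_iff_left₀ (abs.nonneg _) (abs.nonneg _) two_ne_zero).mp h3
  · rw [hsq, hξδ]
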